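/- Let K be a field, let M be a d×n matrix over K of rank d, and let σ be a permutation of {1,…,n}. Let ≺_σ be the total order on {1,…,n} defined by σ(1) ≺_σ σ(2) ≺_σ ⋯ ≺_σ σ(n), and let B(σ) be the least d-element subset of {1,…,n}, in the lexicographic order on d-element subsets induced by ≺_σ (comparing the ≺_σ-increasing lists of elements position by position), whose columns in M are linearly independent. Let C_σ ⊆ ℝⁿ be the convex cone generated by all vectors eᵢ − eⱼ with i ≻_σ j. Then P_M + C_σ = e_{B(σ)} + C_σ, where P_M is the rank polytope of M and e_{B(σ)} = ∑_{i∈B(σ)} eᵢ. -/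

import Mathlib

open Pointwise

noncomputable section

def eVec (n : ℕ) (i : Fin n) : Fin n → ℝ := Pi.single i 1


def lexLtPerm {n : ℕ} (σ : Equiv.Perm (Fin n)) (A B : Finset (Fin n)) : Prop :=
  List.Lex (· < ·) ((A.image σ.symm).sort (· ≤ ·)) ((B.image σ.symm).sort (· ≤ ·))

def coneOfPerm {n : ℕ} (σ : Equiv.Perm (Fin n)) : Set (Fin n → ℝ) :=
  {x | ∃ c : Fin n × Fin n → ℝ, (∀ p, 0 ≤ c p) ∧
    x = ∑ p ∈ Finset.univ.filter (fun p : Fin n × Fin n => σ.symm p.2 < σ.symm p.1),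
      c p • (eVec n p.1 - eVec n p.2)}

/-- Forward direction of the characterization of lex order on strictly sorted lists. -/
theorem lex_sorted_exists {α : Type*} [LinearOrder α] {l₁ l₂ : List α}
    (hlex : List.Lex (· < ·) l₁ l₂) :
    l₁.Pairwise (· < ·) → l₂.Pairwise (· < ·) → l₁.length = l₂.length →
    ∃ z, z ∈ l₁ ∧ z ∉ l₂ ∧ ∀ y, y < z → (y ∈ l₁ ↔ y ∈ l₂) := by
  induction hlex with
  | nil => intro _ _ hlen; simp at hlen
  | @rel a l₁ b l₂ hab =>
    intro h₁ h₂ _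
    refine ⟨a, List.mem_cons_self, ?_, ?_⟩
    · intro hmem
      rcases List.mem_cons.1 hmem with h | h
      · exact absurd h (ne_of_lt hab)
      · exact absurd (List.rel_of_pairwise_cons h₂ h) (not_lt.2 hab.le)
    · intro y hy
      constructor
      · intro hmem
        rcases List.mem_cons.1 hmem with rfl | h
        · exact absurd hy (lt_irrefl _)
        · exact absurd (List.rel_of_pairwise_cons h₁ h) (not_lt.2 hy.le)
      · intro hmem
        rcases List.mem_cons.1 hmem with rfl | h
        · exact absurd (hy.trans hab) (lt_irrefl _)
        · exact absurd (hy.trans (hab.trans (List.rel_of_pairwise_cons h₂ h)))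
            (lt_irrefl _)
  | @cons a l₁ l₂ h ih =>
    intro h₁ h₂ hlen
    obtain ⟨z, hz₁, hz₂, hz₃⟩ := ih h₁.of_cons h₂.of_cons (by simpa using hlen)
    have haz : a < z := List.rel_of_pairwise_cons h₁ hz₁
    refine ⟨z, List.mem_cons_of_mem _ hz₁, ?_, ?_⟩
    · intro hmem
      rcases List.mem_cons.1 hmem with rfl | h'
      · exact absurd haz (lt_irrefl _)
      · exact hz₂ h'
    · intro y hy
      simp only [List.mem_cons]
      constructor
      · rintro (rfl | h')
        · exact Or.inl rfl
        · exact Or.inr ((hz₃ y hy).1 h')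
      · rintro (rfl | h')
        · exact Or.inl rfl
        · exact Or.inr ((hz₃ y hy).2 h')

theorem coneOfPerm_smul_mem {n : ℕ} {σ : Equiv.Perm (Fin n)} {t : ℝ} (ht : 0 ≤ t)
    {x : Fin n → ℝ} (hx : x ∈ coneOfPerm σ) : t • x ∈ coneOfPerm σ := by
  obtain ⟨c, hc, rfl⟩ := hx
  refine ⟨fun p => t * c p, fun p => mul_nonneg ht (hc p), ?_⟩
  rw [Finset.smul_sum]
  exact Finset.sum_congr rfl fun p _ => (mul_smul t (c p) _).symm

theorem coneOfPerm_add_mem {n : ℕ} {σ : Equiv.Perm (Fin n)} {x y : Fin n → ℝ}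
    (hx : x ∈ coneOfPerm σ) (hy : y ∈ coneOfPerm σ) : x + y ∈ coneOfPerm σ := by
  obtain ⟨c, hc, rfl⟩ := hx
  obtain ⟨c', hc', rfl⟩ := hy
  refine ⟨fun p => c p + c' p, fun p => add_nonneg (hc p) (hc' p), ?_⟩
  rw [← Finset.sum_add_distrib]
  exact Finset.sum_congr rfl fun p _ => (add_smul (c p) (c' p) _).symm

theorem coneOfPerm_zero_mem {n : ℕ} (σ : Equiv.Perm (Fin n)) : (0 : Fin n → ℝ) ∈ coneOfPerm σ :=
  ⟨0, fun _ => le_refl _, by simp⟩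

theorem coneOfPerm_convex {n : ℕ} (σ : Equiv.Perm (Fin n)) : Convex ℝ (coneOfPerm σ) :=
  fun _ hx _ hy _ _ ha hb _ =>
    coneOfPerm_add_mem (coneOfPerm_smul_mem ha hx) (coneOfPerm_smul_mem hb hy)

theorem sum_pairs_mem_cone {n d : ℕ} (σ : Equiv.Perm (Fin n)) (b b' : Fin d → Fin n)
    (hord : ∀ k, σ.symm (b k) ≤ σ.symm (b' k)) :
    (∑ k : Fin d, (eVec n (b' k) - eVec n (b k))) ∈ coneOfPerm σ := by
  classical
  set F := Finset.univ.filter (fun p : Fin n × Fin n => σ.symm p.2 < σ.symm p.1) with hF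
  refine ⟨fun p => ∑ k : Fin d, if p = (b' k, b k) then 1 else 0,
    fun p => Finset.sum_nonneg fun k _ => by split <;> norm_num, ?_⟩
  have step1 : ∑ p ∈ F, (∑ k : Fin d, if p = (b' k, b k) then (1:ℝ) else 0) •
      (eVec n p.1 - eVec n p.2)
      = ∑ p ∈ F, ∑ k : Fin d,
        (if p = (b' k, b k) then (eVec n p.1 - eVec n p.2) else 0) := by
    refine Finset.sum_congr rfl fun p _ => ?_
    rw [Finset.sum_smul]
    refine Finset.sum_congr rfl fun k _ => ?_
    split <;> simp
  rw [step1, Finset.sum_comm]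
  refine Finset.sum_congr rfl fun k _ => ?_
  have step2 : ∑ p ∈ F, (if p = (b' k, b k) then (eVec n p.1 - eVec n p.2) else 0)
      = if (b' k, b k) ∈ F then eVec n (b' k) - eVec n (b k) else 0 := by
    rw [Finset.sum_ite_eq' F ((b' k, b k)) (fun p => eVec n p.1 - eVec n p.2)]
  rw [step2]
  rcases lt_or_eq_of_le (hord k) with hlt | heq
  · rw [if_pos (by simp [hF, hlt])]
  · have hbb : b k = b' k := σ.symm.injective heq
    rw [if_neg (by simp [hF, heq]), hbb, sub_self]

def rankPolytope {K : Type*} [Field K] {d n : ℕ} (M : Matrix (Fin d) (Fin n) K) :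
    Set (Fin n → ℝ) :=
  convexHull ℝ {x | ∃ B : Finset (Fin n), B.card = d ∧
    LinearIndependent K (fun i : B => M.transpose (i : Fin n)) ∧
    x = ∑ i ∈ B, eVec n i}

set_option maxHeartbeats 1000000
set_option linter.unusedSectionVars false


section LinAux

open Submodule Module

variable {K : Type*} [Field K] {d n : ℕ} (v : Fin n → (Fin d → K))

/-- monotonicity of linear independence over finsets of indices -/
theorem auxInd_mono {S T : Finset (Fin n)} (h : S ⊆ T)
    (hT : LinearIndependent K (fun a : T => v a)) :
    LinearIndependent K (fun a : S => v a) := by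
  have hf : Function.Injective (fun x : {z // z ∈ S} => (⟨x.1, h x.2⟩ : {z // z ∈ T})) := by
    intro x y hxy
    have h2 : (⟨x.1, h x.2⟩ : {z // z ∈ T}) = ⟨y.1, h y.2⟩ := hxy
    have h3 := Subtype.ext_iff.mp h2
    exact Subtype.ext h3
  exact hT.comp _ hf

theorem auxInd_range (S : Finset (Fin n)) :
    Set.range (fun a : S => v a) = v '' ↑S := by
  ext w
  constructor
  · rintro ⟨⟨a, ha⟩, rfl⟩; exact ⟨a, ha, rfl⟩
  · rintro ⟨a, ha, rfl⟩; exact ⟨⟨a, ha⟩, rfl⟩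

theorem auxInd_finrank {S : Finset (Fin n)}
    (hS : LinearIndependent K (fun a : S => v a)) :
    finrank K (span K (v '' ↑S)) = S.card := by
  rw [← auxInd_range, finrank_span_eq_card hS, Fintype.card_coe]

theorem auxInd_card_le_of_span {I J : Finset (Fin n)}
    (hJ : LinearIndependent K (fun a : J => v a))
    (h : ∀ x ∈ J, v x ∈ span K (v '' ↑I)) : J.card ≤ I.card := by
  classical
  have h1 : span K (v '' ↑J) ≤ span K (v '' ↑I) := by
    rw [span_le]; rintro _ ⟨x, hx, rfl⟩; exact h x hx
  have h2 : finrank K (span K (v '' ↑I)) ≤ I.card := by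
    rw [show v '' ↑I = ↑(I.image v) from (Finset.coe_image).symm]
    exact le_trans (finrank_span_finset_le_card _) Finset.card_image_le
  calc J.card = finrank K (span K (v '' ↑J)) := (auxInd_finrank v hJ).symm
    _ ≤ finrank K (span K (v '' ↑I)) := Submodule.finrank_mono h1
    _ ≤ I.card := h2

theorem auxInd_span_top {S : Finset (Fin n)}
    (hS : LinearIndependent K (fun a : S => v a)) (hcard : S.card = d) :
    span K (v '' ↑S) = ⊤ := by
  apply Submodule.eq_top_of_finrank_eq
  rw [auxInd_finrank v hS, hcard, Module.finrank_pi, Fintype.card_fin]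

theorem auxInd_insert {a : Fin n} {S : Finset (Fin n)} (ha : a ∉ S) :
    LinearIndependent K (fun x : (insert a S : Finset (Fin n)) => v x) ↔
      LinearIndependent K (fun x : S => v x) ∧ v a ∉ span K (v '' ↑S) := by
  have h1 : LinearIndependent K (fun x : (insert a S : Finset (Fin n)) => v x) ↔
      LinearIndependent K (fun x : (insert a (↑S : Set (Fin n)) : Set (Fin n)) => v x) :=
    linearIndependent_equiv' (Equiv.subtypeEquivRight (fun x => by simp))
      (funext fun _ => rfl)
  exact h1.trans (linearIndepOn_insert (s := (↑S : Set (Fin n))) (by simpa using ha))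

theorem auxInd_extend {A : Finset (Fin n)}
    (hA : LinearIndependent K (fun a : A => v a)) (hAcard : A.card = d) :
    ∀ (t : ℕ) (S : Finset (Fin n)), LinearIndependent K (fun a : S => v a) →
      S.card + t = d → ∃ T : Finset (Fin n), S ⊆ T ∧
        LinearIndependent K (fun a : T => v a) ∧ T.card = d := by
  intro t
  induction t with
  | zero => exact fun S hS hc => ⟨S, Finset.Subset.refl _, hS, by omega⟩
  | succ t ih =>
    intro S hS hc
    have hex : ∃ a ∈ A, v a ∉ span K (v '' ↑S) := by
      by_contra hcon
      push_neg at hcon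
      have htop : span K (v '' ↑S) = ⊤ := by
        rw [eq_top_iff, ← auxInd_span_top v hA hAcard, span_le]
        rintro _ ⟨x, hx, rfl⟩
        exact hcon x hx
      have : finrank K (span K (v '' ↑S)) = S.card := auxInd_finrank v hS
      rw [htop, finrank_top, Module.finrank_pi, Fintype.card_fin] at this
      omega
    obtain ⟨a, haA, haspan⟩ := hex
    have haS : a ∉ S := fun h => haspan (subset_span ⟨a, h, rfl⟩)
    have hins : LinearIndependent K (fun x : (insert a S : Finset (Fin n)) => v x) :=
      (auxInd_insert v haS).2 ⟨hS, haspan⟩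
    obtain ⟨T, hsub, hT, hcard⟩ := ih (insert a S) hins
      (by rw [Finset.card_insert_of_notMem haS]; omega)
    exact ⟨T, (Finset.subset_insert a S).trans hsub, hT, hcard⟩

theorem auxInd_card_le {S : Finset (Fin n)}
    (hS : LinearIndependent K (fun a : S => v a)) : S.card ≤ d := by
  have := hS.fintype_card_le_finrank
  rwa [Fintype.card_coe, Module.finrank_pi, Fintype.card_fin] at this

end LinAux


section Gale

open Submodule Module

variable {K : Type*} [Field K] {d n : ℕ} (v : Fin n → (Fin d → K))

theorem gale_dom (A A' : Finset (Fin n))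
    (hA : LinearIndependent K (fun a : A => v a)) (hAc : A.card = d)
    (hA' : LinearIndependent K (fun a : A' => v a)) (hA'c : A'.card = d)
    (hmin : ∀ T : Finset (Fin n), T.card = d → LinearIndependent K (fun a : T => v a) →
      A = T ∨ List.Lex (· < ·) (A.sort (· ≤ ·)) (T.sort (· ≤ ·)))
    (k : ℕ) (hk : k < (A.sort (· ≤ ·)).length) (hk' : k < (A'.sort (· ≤ ·)).length) :
    (A.sort (· ≤ ·))[k] ≤ (A'.sort (· ≤ ·))[k] := by
  classical
  by_contra hcon
  push_neg at hcon
  set l : List (Fin n) := A.sort (· ≤ ·) with hl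
  set l' : List (Fin n) := A'.sort (· ≤ ·) with hl'
  have hsl : l.Pairwise (· < ·) := (Finset.sortedLT_sort _).pairwise
  have hsl' : l'.Pairwise (· < ·) := (Finset.sortedLT_sort _).pairwise
  have hlen : l.length = d := by rw [hl, Finset.length_sort, hAc]
  have hlen' : l'.length = d := by rw [hl', Finset.length_sort, hA'c]
  have hkd : k < d := hlen ▸ hk
  set I : Finset (Fin n) := (l.take k).toFinset with hI
  set J : Finset (Fin n) := (l'.take (k + 1)).toFinset with hJ
  have hInodup : (l.take k).Nodup := (Finset.sort_nodup _ _).sublist (List.take_sublist _ _)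
  have hJnodup : (l'.take (k + 1)).Nodup :=
    (Finset.sort_nodup _ _).sublist (List.take_sublist _ _)
  have hIcard : I.card = k := by
    rw [hI, List.toFinset_card_of_nodup hInodup, List.length_take]; omega
  have hJcard : J.card = k + 1 := by
    rw [hJ, List.toFinset_card_of_nodup hJnodup, List.length_take]; omega
  have hIA : I ⊆ A := by
    intro x hx
    rw [hI, List.mem_toFinset] at hx
    exact (Finset.mem_sort _).1 (List.mem_of_mem_take hx)
  have hJA' : J ⊆ A' := by
    intro x hx
    rw [hJ, List.mem_toFinset] at hx
    exact (Finset.mem_sort _).1 (List.mem_of_mem_take hx)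
  have hJle : ∀ x ∈ J, x ≤ l'[k] := by
    intro x hx
    rw [hJ, List.mem_toFinset] at hx
    obtain ⟨j, hj, hjx⟩ := List.mem_iff_getElem.1 hx
    rw [List.length_take] at hj
    have hjlen : j < l'.length := by omega
    have hval : l'[j] = x := by simpa [List.getElem_take] using hjx
    have : l'.get ⟨j, hjlen⟩ ≤ l'.get ⟨k, hk'⟩ :=
      hsl'.sortedLT.strictMono_get.monotone (by simp; omega)
    simpa [hval] using this
  have hIlt : ∀ y ∈ I, y < l[k] := by
    intro y hy
    rw [hI, List.mem_toFinset] at hy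
    obtain ⟨j, hj, hjy⟩ := List.mem_iff_getElem.1 hy
    rw [List.length_take] at hj
    have hjlen : j < l.length := by omega
    have hval : l[j] = y := by simpa [List.getElem_take] using hjy
    have : l.get ⟨j, hjlen⟩ < l.get ⟨k, hk⟩ := hsl.sortedLT.strictMono_get (by simp; omega)
    simpa [hval] using this
  have hltI : ∀ y ∈ A, y < l[k] → y ∈ I := by
    intro y hyA hylt
    obtain ⟨j, hj, hjy⟩ := List.mem_iff_getElem.1 ((Finset.mem_sort (α := Fin n) (· ≤ ·)).2 hyA)
    have hjk : j < k := by
      by_contra hge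
      have : l.get ⟨k, hk⟩ ≤ l.get ⟨j, hj⟩ :=
        hsl.sortedLT.strictMono_get.monotone (by simp; omega)
      simp only [List.get_eq_getElem] at this
      rw [hjy] at this
      exact absurd hylt (not_lt.2 this)
    rw [hI, List.mem_toFinset]
    have hmem : (l.take k)[j]'(by rw [List.length_take]; omega) ∈ l.take k :=
      List.getElem_mem _
    have : (l.take k)[j]'(by rw [List.length_take]; omega) = y := by
      simpa [List.getElem_take] using hjy
    rwa [this] at hmem
  -- exchange step
  have hJind : LinearIndependent K (fun a : J => v a) := auxInd_mono v hJA' hA'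
  have hex : ∃ x ∈ J, v x ∉ span K (v '' ↑I) := by
    by_contra hcon2
    push_neg at hcon2
    have := auxInd_card_le_of_span v hJind hcon2
    omega
  obtain ⟨x, hxJ, hxspan⟩ := hex
  have hxI : x ∉ I := fun h => hxspan (subset_span ⟨x, h, rfl⟩)
  have hxlt : x < l[k] := lt_of_le_of_lt (hJle x hxJ) hcon
  have hxA : x ∉ A := fun h => hxI (hltI x h hxlt)
  have hIind : LinearIndependent K (fun a : I => v a) := auxInd_mono v hIA hA
  have hins : LinearIndependent K (fun a : (insert x I : Finset (Fin n)) => v a) :=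
    (auxInd_insert v hxI).2 ⟨hIind, hxspan⟩
  obtain ⟨T, hsubT, hTind, hTcard⟩ := auxInd_extend v hA hAc (d - (k + 1)) (insert x I) hins
    (by rw [Finset.card_insert_of_notMem hxI, hIcard]; omega)
  have hxT : x ∈ T := hsubT (Finset.mem_insert_self x I)
  rcases hmin T hTcard hTind with heq | hlex
  · exact hxA (heq ▸ hxT)
  · obtain ⟨z, hzl, hzT', hbelow⟩ := lex_sorted_exists hlex (Finset.sortedLT_sort _).pairwise
      (Finset.sortedLT_sort _).pairwise (by rw [Finset.length_sort, Finset.length_sort, hAc, hTcard])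
    have hzA : z ∈ A := (Finset.mem_sort _).1 hzl
    have hzT : z ∉ T := fun h => hzT' ((Finset.mem_sort _).2 h)
    have hzx : ¬ x < z := fun h =>
      hxA ((Finset.mem_sort _).1 ((hbelow x h).2 ((Finset.mem_sort _).2 hxT)))
    have hzltx : z < x := lt_of_le_of_ne (not_lt.1 hzx) (fun h => hxA (h ▸ hzA))
    exact hzT (hsubT (Finset.mem_insert_of_mem (hltI z hzA (hzltx.trans hxlt))))

end Gale


theorem sum_eVec_eq {n : ℕ} (d : ℕ) (σ : Equiv.Perm (Fin n)) (B : Finset (Fin n))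
    (hLd : ((B.image σ.symm).sort (· ≤ ·)).length = d) :
    (∑ i ∈ B, eVec n i)
      = ∑ kk : Fin d,
          eVec n (σ (((B.image σ.symm).sort (· ≤ ·)).get (Fin.cast hLd.symm kk))) := by
  classical
  set L := (B.image σ.symm).sort (· ≤ ·) with hL
  have h1 : ∑ a ∈ B.image σ.symm, eVec n (σ a) = ∑ i ∈ B, eVec n (σ (σ.symm i)) :=
    Finset.sum_image (by intro x _ y _ hxy; exact σ.symm.injective hxy)
  have h2 : ∑ i ∈ B, eVec n i = ∑ a ∈ B.image σ.symm, eVec n (σ a) := by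
    rw [h1]; simp
  have h3 : ∑ a ∈ B.image σ.symm, eVec n (σ a)
      = (L.map (fun a => eVec n (σ a))).sum := by
    conv_lhs => rw [← Finset.sort_toFinset (s := B.image σ.symm) (r := (· ≤ ·))]
    exact List.sum_toFinset _ (Finset.sort_nodup _ _)
  have h4 : (L.map (fun a => eVec n (σ a))).sum
      = ∑ i : Fin L.length, eVec n (σ (L.get i)) := by
    rw [← Fin.sum_univ_fun_getElem L (fun a => eVec n (σ a))]
    exact Finset.sum_congr rfl fun i _ => by rw [List.get_eq_getElem]
  have h5 : ∑ kk : Fin d, eVec n (σ (L.get (Fin.cast hLd.symm kk)))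
      = ∑ i : Fin L.length, eVec n (σ (L.get i)) :=
    Fin.sum_congr' (fun i => eVec n (σ (L.get i))) hLd.symm
  rw [h2, h3, h4, h5]

/-- Gale maximality: if `B(σ)` is the `≺_σ`-lexicographically first column basis of `M`,
then `P_M + C_σ = e_{B(σ)} + C_σ`. -/
theorem rankPolytope_add_coneOfPerm_eq {K : Type*} [Field K] {d n : ℕ}
    (M : Matrix (Fin d) (Fin n) K) (hM : M.rank = d)
    (σ : Equiv.Perm (Fin n)) (Bσ : Finset (Fin n)) (hBσcard : Bσ.card = d)
    (hBσind : LinearIndependent K (fun i : Bσ => M.transpose (i : Fin n)))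
    (hBσleast : ∀ B' : Finset (Fin n), B'.card = d →
      LinearIndependent K (fun i : B' => M.transpose (i : Fin n)) →
      Bσ = B' ∨ lexLtPerm σ Bσ B') :
    rankPolytope M + coneOfPerm σ = {∑ i ∈ Bσ, eVec n i} + coneOfPerm σ := by
  classical
  set v : Fin n → (Fin d → K) := fun a => M.transpose (σ a) with hv
  have htrans : ∀ B : Finset (Fin n),
      LinearIndependent K (fun i : B => M.transpose (i : Fin n)) ↔
      LinearIndependent K (fun a : (B.image σ.symm : Finset (Fin n)) => v a) := by
    intro B
    exact (linearIndependent_equiv'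
      ((Equiv.subtypeEquiv σ (fun a => by
        simp [Finset.mem_image, Equiv.symm_apply_eq])) :
          ((B.image σ.symm : Finset (Fin n)) : Type _) ≃ (B : Type _))
      (f := fun i : B => M.transpose (i : Fin n))
      (g := fun a : (B.image σ.symm : Finset (Fin n)) => v a) (funext fun _ => rfl)).symm
  have himim : ∀ T : Finset (Fin n), (T.image σ).image σ.symm = T := by
    intro T; rw [Finset.image_image]; simp
  set A : Finset (Fin n) := Bσ.image σ.symm with hA
  have hAc : A.card = d := by
    rw [hA, Finset.card_image_of_injective _ σ.symm.injective, hBσcard]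
  have hAind : LinearIndependent K (fun a : A => v a) := (htrans Bσ).1 hBσind
  have hmin : ∀ T : Finset (Fin n), T.card = d →
      LinearIndependent K (fun a : T => v a) →
      A = T ∨ List.Lex (· < ·) (A.sort (· ≤ ·)) (T.sort (· ≤ ·)) := by
    intro T hTc hTi
    have hT1 : (T.image σ).card = d := by
      rw [Finset.card_image_of_injective _ σ.injective]; exact hTc
    have hTi' : LinearIndependent K
        (fun i : (T.image σ : Finset (Fin n)) => M.transpose (i : Fin n)) := by
      apply (htrans (T.image σ)).2
      rw [himim T]
      exact hTi
    rcases hBσleast (T.image σ) hT1 hTi' with heq | hlex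
    · left; rw [hA, heq, himim T]
    · right
      unfold lexLtPerm at hlex
      rwa [himim T] at hlex
  have hkey : ∀ B' : Finset (Fin n), B'.card = d →
      LinearIndependent K (fun i : B' => M.transpose (i : Fin n)) →
      (∑ i ∈ B', eVec n i) ∈ ({∑ i ∈ Bσ, eVec n i} + coneOfPerm σ : Set (Fin n → ℝ)) := by
    intro B' hc hi
    set A' : Finset (Fin n) := B'.image σ.symm with hA'
    have hA'c : A'.card = d := by
      rw [hA', Finset.card_image_of_injective _ σ.symm.injective, hc]
    have hA'ind : LinearIndependent K (fun a : A' => v a) := (htrans B').1 hi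
    have hlen : (A.sort (· ≤ ·)).length = d := by rw [Finset.length_sort, hAc]
    have hlen' : (A'.sort (· ≤ ·)).length = d := by rw [Finset.length_sort, hA'c]
    set b : Fin d → Fin n :=
      fun kk => σ ((A.sort (· ≤ ·)).get (Fin.cast hlen.symm kk)) with hb
    set b' : Fin d → Fin n :=
      fun kk => σ ((A'.sort (· ≤ ·)).get (Fin.cast hlen'.symm kk)) with hb'
    have hord : ∀ kk : Fin d, σ.symm (b kk) ≤ σ.symm (b' kk) := by
      intro kk
      have hg := gale_dom v A A' hAind hAc hA'ind hA'c hmin kk.1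
        (by rw [hlen]; exact kk.2) (by rw [hlen']; exact kk.2)
      simp only [hb, hb', Equiv.symm_apply_apply, List.get_eq_getElem]
      exact hg
    have hsB : (∑ i ∈ Bσ, eVec n i) = ∑ kk : Fin d, eVec n (b kk) :=
      sum_eVec_eq d σ Bσ hlen
    have hsB' : (∑ i ∈ B', eVec n i) = ∑ kk : Fin d, eVec n (b' kk) :=
      sum_eVec_eq d σ B' hlen'
    refine Set.mem_add.2 ⟨∑ i ∈ Bσ, eVec n i, rfl,
      ∑ kk : Fin d, (eVec n (b' kk) - eVec n (b kk)),
      sum_pairs_mem_cone σ b b' hord, ?_⟩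
    rw [hsB, hsB', ← Finset.sum_add_distrib]
    exact Finset.sum_congr rfl fun kk _ => by abel
  have hP : rankPolytope M ⊆ {∑ i ∈ Bσ, eVec n i} + coneOfPerm σ := by
    apply convexHull_min
    · rintro x ⟨B', hc, hi, rfl⟩
      exact hkey B' hc hi
    · exact (convex_singleton _).add (coneOfPerm_convex σ)
  apply Set.Subset.antisymm
  · intro z hz
    obtain ⟨p, hp, q, hq, rfl⟩ := Set.mem_add.1 hz
    obtain ⟨e0, he0, y0, hy0, rfl⟩ := Set.mem_add.1 (hP hp)
    exact Set.mem_add.2 ⟨e0, he0, y0 + q, coneOfPerm_add_mem hy0 hq, (add_assoc _ _ _).symm⟩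
  · intro z hz
    obtain ⟨e0, he0, q, hq, rfl⟩ := Set.mem_add.1 hz
    obtain rfl := Set.mem_singleton_iff.1 he0
    exact Set.mem_add.2 ⟨_, subset_convexHull ℝ _ ⟨Bσ, hBσcard, hBσind, rfl⟩, q, hq, rfl⟩
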